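/- Let (M, γ) be a closed oriented 2-dimensional Riemannian manifold of constant Gauss curvature ε and let L(ξ)_A = D_A D^C ξ_C + ½(−Δξ_A − ε ξ_A) + ε ξ_A (equivalently L = D∘div₁ − div₂∘C + ε). Then every ξ in the kernel of L satisfies D_A ξ^A = 0, and the kernel of L consists exactly of the harmonic 1-forms, i.e. ξ with D^A ξ_A = 0 and ε^{AB} D_A ξ_B = 0. In particular dim ker L = 2g where g is the genus of M. -/
import Mathlib


/-- On a closed oriented surface of constant Gauss curvature `ε`, the operator
`L ξ = D (div ξ) + ½(−Δξ − εξ) + εξ` has kernel consisting exactly of the harmonic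
1-forms (`div ξ = 0` and `curl ξ = 0`); in particular every `ξ ∈ ker L` is
divergence-free, and `dim ker L = 2g` where `g` is the genus.  The geometric facts used in
the proof (divergence/curl identities, Hodge decomposition, the kernel of the scalar
Laplacian consisting of constants, the divergence theorem, and the eigenvalue equation for
harmonic 1-forms) are supplied as hypotheses; `intS` is the integral functional on scalar
fields, `Dperp f = ε_{AB} D^B f`. -/
theorem stmt_9 {Sc F : Type*} [AddCommGroup Sc] [Module ℝ Sc]
    [AddCommGroup F] [Module ℝ F]
    (ε : ℝ) (g : ℕ)
    (grad Dperp : Sc →ₗ[ℝ] F) (divF curl : F →ₗ[ℝ] Sc)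
    (lapS : Sc →ₗ[ℝ] Sc) (lapF : F →ₗ[ℝ] F)
    (intS : Sc →ₗ[ℝ] ℝ)
    (hdivgrad : ∀ f, divF (grad f) = lapS f)
    (hcurlgrad : ∀ f, curl (grad f) = 0)
    (hdivperp : ∀ f, divF (Dperp f) = 0)
    (hcurlperp : ∀ f, curl (Dperp f) = - lapS f)
    (hlapDperp : ∀ f, lapF (Dperp f) = Dperp (lapS f) + ε • Dperp f)
    (hharm : ∀ r, divF r = 0 → curl r = 0 → lapF r = ε • r)
    (hdivlap : ∀ ξ, divF (lapF ξ) = lapS (divF ξ) + ε • divF ξ)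
    (hintdiv : ∀ ξ, intS (divF ξ) = 0)
    (hintlap : ∀ f, intS (lapS f) = 0)
    (hconst : ∀ f, lapS f = 0 → intS f = 0 → f = 0)
    (hgradconst : ∀ f, lapS f = 0 → grad f = 0)
    (hHodge : ∀ ξ : F, ∃ ψ φ r, divF r = 0 ∧ curl r = 0 ∧ ξ = grad ψ + Dperp φ + r)
    (L : F →ₗ[ℝ] F)
    (hL : ∀ ξ, L ξ = grad (divF ξ) + (1 / 2 : ℝ) • (-(lapF ξ) - ε • ξ) + ε • ξ) :
    (∀ ξ, L ξ = 0 → divF ξ = 0)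
    ∧ (LinearMap.ker L = LinearMap.ker divF ⊓ LinearMap.ker curl)
    ∧ (Module.finrank ℝ ↥(LinearMap.ker divF ⊓ LinearMap.ker curl) = 2 * g →
        Module.finrank ℝ ↥(LinearMap.ker L) = 2 * g) := by
  have key : ∀ ξ, L ξ = 0 → divF ξ = 0 := by
    intro ξ h
    have h1 : divF (L ξ) = 0 := by rw [h]; simp
    rw [hL] at h1
    simp only [map_add, map_smul, map_sub, map_neg, hdivgrad, hdivlap] at h1
    have h2 : (1 / 2 : ℝ) • lapS (divF ξ) = 0 := by
      rw [← h1]; module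
    have h3 : lapS (divF ξ) = 0 := by
      rcases smul_eq_zero.mp h2 with h | h
      · norm_num at h
      · exact h
    exact hconst _ h3 (hintdiv ξ)
  have hker : LinearMap.ker L = LinearMap.ker divF ⊓ LinearMap.ker curl := by
    ext ξ
    simp only [LinearMap.mem_ker, Submodule.mem_inf]
    constructor
    · intro h
      have hd : divF ξ = 0 := key ξ h
      refine ⟨hd, ?_⟩
      have heig : lapF ξ = ε • ξ := by
        have h' := h
        rw [hL, hd, map_zero] at h'
        have : (1 / 2 : ℝ) • (ε • ξ - lapF ξ) = 0 := by rw [← h']; module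
        rcases smul_eq_zero.mp this with h'' | h''
        · norm_num at h''
        · exact (sub_eq_zero.mp h'').symm
      obtain ⟨ψ, φ, r, hr1, hr2, hξ⟩ := hHodge ξ
      have hψ : lapS ψ = 0 := by
        have := hd
        rw [hξ] at this
        simpa [hdivgrad, hdivperp, hr1] using this
      have hgψ : grad ψ = 0 := hgradconst ψ hψ
      have hξ' : ξ = Dperp φ + r := by rw [hξ, hgψ, zero_add]
      have hDφ : Dperp (lapS φ) = 0 := by
        have h4 : lapF ξ = lapF (Dperp φ) + lapF r := by rw [hξ']; simp
        rw [heig, hξ', hlapDperp, hharm r hr1 hr2] at h4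
        have h5 : Dperp (lapS φ) = ε • (Dperp φ + r) - ε • Dperp φ - ε • r := by
          rw [h4]; module
        rw [h5]; module
      have hφ : lapS (lapS φ) = 0 := by
        have h6 := congrArg curl hDφ
        simpa [hcurlperp, neg_eq_zero] using h6
      have hφ' : lapS φ = 0 := hconst _ hφ (hintlap φ)
      rw [hξ']
      simp [hcurlperp, hr2, hφ']
    · rintro ⟨hd, hc⟩
      rw [hL, hd, map_zero, hharm ξ hd hc]
      module
  refine ⟨key, hker, fun h => by rw [hker]; exact h⟩
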